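/- Let (G_i)_{i ∈ ι} be a family of groups, let i₀ ∈ ι, and let A be the range of the canonical homomorphism G_{i₀} →* Monoid.CoprodI G into the free product of the family. Then A is malnormal in the free product: for every element x of Monoid.CoprodI G, if x A x⁻¹ ∩ A ≠ {1} then x ∈ A. -/

import Mathlib

section Aux

open Monoid CoprodI Monoid.CoprodI.Word

variable {ι : Type*} {G : ι → Type*} [∀ i, Group (G i)] [DecidableEq ι] [∀ i, DecidableEq (G i)]

lemma fstIdx_rcons {i : ι} (p : Word.Pair G i) :
    fstIdx (rcons p) = if p.head = 1 then fstIdx p.tail else some i := by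
  rw [rcons]
  split_ifs with h <;> simp [h]

lemma equiv_mul (a b : Monoid.CoprodI G) : Word.equiv (a * b) = a • Word.equiv b :=
  mul_smul a b (Word.empty : Word G)

lemma fstIdx_of_smul {i : ι} (g : G i) (u : Word G) (h : fstIdx u ≠ some i) :
    fstIdx ((of g : Monoid.CoprodI G) • u) = if g = 1 then fstIdx u else some i := by
  rw [of_smul_def, equivPair_eq_of_fstIdx_ne h]
  simp [fstIdx_rcons]

lemma fstIdx_equiv_of {i : ι} (g : G i) :
    fstIdx (Word.equiv (of g : Monoid.CoprodI G)) = if g = 1 then none else some i := by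
  have h1 : Word.equiv (of g : Monoid.CoprodI G) = (of g : Monoid.CoprodI G) • Word.empty := rfl
  have h2 : fstIdx (Word.empty : Word G) ≠ some i := by simp [fstIdx, Word.empty]
  rw [h1, fstIdx_of_smul _ _ h2]
  simp [fstIdx, Word.empty]

set_option linter.unusedSectionVars false

lemma key_S (i₀ : ι) (w : Word G) :
    ∀ g : G i₀, g ≠ 1 →
      fstIdx (Word.equiv (w.prod * of g : Monoid.CoprodI G)) = fstIdx w ∨
        ((∀ l ∈ w.toList, l.1 = i₀) ∧ w.toList.length ≤ 1) := by
  induction w using consRecOn with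
  | empty =>
    intro g hg
    right
    simp [Word.empty]
  | cons j m w' h1 h2 ih =>
    intro g hg
    have hequiv : Word.equiv ((cons m w' h1 h2).prod * of g : Monoid.CoprodI G)
        = (of m : Monoid.CoprodI G) • Word.equiv (w'.prod * of g) := by
      rw [prod_cons, mul_assoc, equiv_mul]
    by_cases hu : fstIdx (Word.equiv (w'.prod * of g : Monoid.CoprodI G)) = some j
    · rcases ih g hg with h | ⟨hall, hlen⟩
      · rw [h] at hu; exact absurd hu h1
      · rcases hl : w'.toList with _ | ⟨l, ls⟩
        · -- w' is empty
          have hw' : w' = Word.empty := Word.ext hl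
          subst hw'
          have : fstIdx (Word.equiv ((Word.empty : Word G).prod * of g : Monoid.CoprodI G))
              = some i₀ := by
            rw [prod_empty, one_mul, fstIdx_equiv_of, if_neg hg]
          rw [this] at hu
          have hj : j = i₀ := by injection hu.symm
          subst hj
          right
          constructor
          · intro l hl'
            have hle : l = ⟨j, m⟩ := by simpa [Word.empty] using hl'
            rw [hle]
          · simp [Word.empty]
        · -- w' is a single letter of index i₀
          have hls : ls = [] := by
            have := hlen
            rw [hl] at this
            simpa using this
          subst hls
          have hli : l.1 = i₀ := hall l (by rw [hl]; exact List.mem_cons_self)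
          have hprod : w'.prod = of l.2 := by
            rw [Word.prod, hl]
            simp
          have hfw' : fstIdx w' = some l.1 := by
            rw [fstIdx, hl]; rfl
          exfalso
          have hji : j ≠ i₀ := by
            intro hji
            apply h1
            rw [hfw', hli, hji]
          clear hl hlen hall hfw'
          obtain ⟨li, ml⟩ := l
          dsimp only at hli
          subst hli
          rw [hprod, ← map_mul, fstIdx_equiv_of] at hu
          split_ifs at hu with hc
          exact hji (Option.some.inj hu).symm
    · left
      rw [hequiv, fstIdx_of_smul _ _ hu, if_neg h2, fstIdx_cons]

lemma key_M (i₀ : ι) (t : Word G) (ht : fstIdx t ≠ some i₀) (g : G i₀) (hg : g ≠ 1)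
    (hmem : t.prod * of g * t.prod⁻¹ ∈ (of : G i₀ →* Monoid.CoprodI G).range) :
    t = Word.empty := by
  obtain ⟨h, hh⟩ := hmem
  by_contra hne
  obtain ⟨l, ls, hl⟩ := List.exists_cons_of_ne_nil
    (fun hnil => hne (Word.ext hnil) : t.toList ≠ [])
  have hft : fstIdx t = some l.1 := by rw [fstIdx, hl]; rfl
  have hji : l.1 ≠ i₀ := fun h' => ht (by rw [hft, h'])
  have hne1 : h ≠ 1 := by
    rintro rfl
    rw [map_one] at hh
    have h2 : t.prod * of g = t.prod := by
      have h2' := hh.symm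
      rw [mul_inv_eq_one] at h2'
      exact h2'
    have h3 : (of g : Monoid.CoprodI G) = 1 := by
      refine mul_left_cancel (a := t.prod) ?_
      rw [mul_one, h2]
    exact hg (of_injective i₀ (by rw [h3, map_one]))
  have key : Word.equiv ((of h : Monoid.CoprodI G) * t.prod) =
      Word.equiv (t.prod * of g) := by
    rw [hh]
    congr 1
    group
  have het : Word.equiv t.prod = t := Word.equiv.apply_symm_apply t
  have lhs : fstIdx (Word.equiv ((of h : Monoid.CoprodI G) * t.prod)) = some i₀ := by
    rw [equiv_mul, het, fstIdx_of_smul _ _ ht, if_neg hne1]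
  rcases key_S i₀ t g hg with hr | ⟨hall, _⟩
  · rw [← key, lhs, hft] at hr
    exact hji (Option.some.inj hr).symm
  · exact hji (hall l (by rw [hl]; exact List.mem_cons_self))

end Aux

open Monoid CoprodI Monoid.CoprodI.Word

/-- A free factor of a free product is malnormal: if `A` is the image of one of the
canonical homomorphisms `G i₀ →* Monoid.CoprodI G`, then for every `x` in the free
product, `x A x⁻¹ ⊓ A ≠ ⊥` implies `x ∈ A`. -/
theorem coprodI_factor_malnormal {ι : Type*} (G : ι → Type*) [∀ i, Group (G i)]
    (i₀ : ι) (A : Subgroup (Monoid.CoprodI G))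
    (hA : A = (Monoid.CoprodI.of : G i₀ →* Monoid.CoprodI G).range) :
    ∀ x : Monoid.CoprodI G,
      Subgroup.map (MulAut.conj x).toMonoidHom A ⊓ A ≠ ⊥ → x ∈ A := by
  classical
  subst hA
  intro x hx
  obtain ⟨y, hy, hy1⟩ : ∃ y ∈ Subgroup.map (MulAut.conj x).toMonoidHom
      (Monoid.CoprodI.of : G i₀ →* Monoid.CoprodI G).range ⊓
      (Monoid.CoprodI.of : G i₀ →* Monoid.CoprodI G).range, y ≠ 1 := by
    rcases Subgroup.bot_or_exists_ne_one (Subgroup.map (MulAut.conj x).toMonoidHom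
      (Monoid.CoprodI.of : G i₀ →* Monoid.CoprodI G).range ⊓
      (Monoid.CoprodI.of : G i₀ →* Monoid.CoprodI G).range) with hbot | h
    · exact absurd hbot hx
    · exact h
  obtain ⟨hy1m, hy2⟩ := hy
  obtain ⟨a, ha, hconj⟩ := Subgroup.mem_map.mp hy1m
  obtain ⟨g, rfl⟩ := ha
  obtain ⟨h, hhy⟩ := hy2
  have hxconj : x * Monoid.CoprodI.of g * x⁻¹ = y := by
    rw [← hconj]; rfl
  have hgne : g ≠ 1 := by
    rintro rfl
    apply hy1
    rw [← hxconj, map_one, mul_one, mul_inv_cancel]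
  set w := Word.equiv x with hw
  set p := Word.equivPair i₀ w with hp
  have hxd : x = Monoid.CoprodI.of p.head * p.tail.prod := by
    have h1 : Word.prod w = x := Word.equiv.symm_apply_apply x
    have h2 : Word.rcons p = w := by
      rw [hp, ← Word.equivPair_symm, Equiv.symm_apply_apply]
    rw [← h1, ← h2, Word.prod_rcons]
  have hmem : p.tail.prod * Monoid.CoprodI.of g * p.tail.prod⁻¹ ∈
      (Monoid.CoprodI.of : G i₀ →* Monoid.CoprodI G).range := by
    refine ⟨p.head⁻¹ * h * p.head, ?_⟩
    rw [map_mul, map_mul, map_inv]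
    have hofh : (Monoid.CoprodI.of h : Monoid.CoprodI G) =
        x * Monoid.CoprodI.of g * x⁻¹ := by rw [hhy, hxconj]
    rw [hofh, hxd]
    group
  have htail := key_M i₀ p.tail p.fstIdx_ne g hgne hmem
  rw [hxd, htail, Word.prod_empty, mul_one]
  exact ⟨p.head, rfl⟩
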